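/- Let m be a function ℕ → ℂ∖{0} and λ ∈ ℂ, and let β ≥ 1 be an integer. Given a formal power series ĝ(t) = Σ_{j≥0} (g_j/m(j)) t^j with coefficients in a commutative ring (or Banach space with scalar λ), the unique formal power series û satisfying (∂_{m,t} − λ)^β û = ĝ with ∂^j_{m,t} û(0) = 0 for j = 0,…,β−1 is given by û = Σ_{k≥β−1} C(k, β−1) (∂^{-1}_{m,t})^{k+1} λ^{k−β+1} ĝ. -/

import Mathlib

/-- The moment differentiation `∂_{m,t}`, acting on the `u`-coefficient sequence of
`Σ (u_j/m(j)) t^j`, is the shift `u_j ↦ u_{j+1}` (independent of `m` in this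
representation). -/
noncomputable def shiftE : Module.End ℂ (ℕ → ℂ) where
  toFun a := fun j => a (j + 1)
  map_add' a b := by funext j; simp
  map_smul' c a := by funext j; simp

noncomputable def Gsol (lam : ℂ) (β : ℕ) (g : ℕ → ℂ) : ℕ → ℂ :=
  fun j => ∑ k ∈ Finset.Ico (β - 1) j,
    (k.choose (β - 1) : ℂ) * lam ^ (k + 1 - β) * g (j - k - 1)

lemma D_apply (lam : ℂ) (u : ℕ → ℂ) (j : ℕ) :
    ((shiftE - lam • (1 : Module.End ℂ (ℕ → ℂ))) u) j = u (j + 1) - lam * u j := by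
  simp [shiftE, LinearMap.sub_apply]

lemma DG_one (lam : ℂ) (g : ℕ → ℂ) :
    (shiftE - lam • (1 : Module.End ℂ (ℕ → ℂ))) (Gsol lam 1 g) = g := by
  funext j
  rw [D_apply]
  simp only [Gsol, Nat.sub_self, ← Finset.range_eq_Ico, Nat.choose_zero_right,
    Nat.cast_one, one_mul, Nat.add_sub_cancel]
  rw [Finset.sum_range_succ', Finset.mul_sum]
  have : ∀ k ∈ Finset.range j,
      lam ^ (k + 1) * g (j + 1 - (k + 1) - 1) = lam * (lam ^ k * g (j - k - 1)) := by
    intro k hk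
    have : j + 1 - (k + 1) - 1 = j - k - 1 := by omega
    rw [this, pow_succ]; ring
  rw [Finset.sum_congr rfl this]
  simp

lemma DG_succ (lam : ℂ) (g : ℕ → ℂ) (b : ℕ) :
    (shiftE - lam • (1 : Module.End ℂ (ℕ → ℂ))) (Gsol lam (b + 2) g) = Gsol lam (b + 1) g := by
  funext j
  rw [D_apply]
  simp only [Gsol, show b + 2 - 1 = b + 1 from rfl]
  -- first sum: reindex Ico (b+1) (j+1) as image of Ico b j under (+1)
  have hmap : Finset.Ico (b + 1) (j + 1) = Finset.map (addRightEmbedding 1) (Finset.Ico b j) := by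
    rw [Finset.map_add_right_Ico]
  rw [hmap, Finset.sum_map]
  simp only [addRightEmbedding_apply]
  have hterm : ∀ k ∈ Finset.Ico b j,
      ((k + 1).choose (b + 1) : ℂ) * lam ^ (k + 1 + 1 - (b + 2)) * g (j + 1 - (k + 1) - 1)
      = (k.choose b : ℂ) * lam ^ (k + 1 - (b + 1)) * g (j - k - 1)
        + (k.choose (b + 1) : ℂ) * lam ^ (k - b) * g (j - k - 1) := by
    intro k hk
    have h1 : j + 1 - (k + 1) - 1 = j - k - 1 := by omega
    have h2 : k + 1 + 1 - (b + 2) = k - b := by omega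
    have h3 : k + 1 - (b + 1) = k - b := by omega
    rw [h1, h2, h3, Nat.choose_succ_succ, Nat.cast_add]
    ring
  rw [Finset.sum_congr rfl hterm, Finset.sum_add_distrib]
  have hsec : ∑ k ∈ Finset.Ico b j, (k.choose (b + 1) : ℂ) * lam ^ (k - b) * g (j - k - 1)
      = lam * ∑ k ∈ Finset.Ico (b + 1) j,
          (k.choose (b + 1) : ℂ) * lam ^ (k + 1 - (b + 2)) * g (j - k - 1) := by
    rw [Finset.mul_sum]
    by_cases hbj : b < j
    · rw [Finset.sum_eq_sum_Ico_succ_bot hbj]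
      simp only [Nat.choose_succ_self, Nat.cast_zero, zero_mul, zero_add]
      refine Finset.sum_congr rfl ?_
      intro k hk
      simp only [Finset.mem_Ico] at hk
      have h2 : k + 1 - (b + 2) = k - b - 1 := by omega
      have h4 : lam ^ (k - b) = lam * lam ^ (k - b - 1) := by
        rw [← pow_succ']; congr 1; omega
      rw [h2, h4]
      ring
    · rw [Finset.Ico_eq_empty hbj, Finset.Ico_eq_empty (by omega)]
      simp
  rw [hsec]
  simp only [Nat.add_sub_cancel, add_sub_cancel_right]

lemma uniq (lam : ℂ) (β : ℕ) (d : ℕ → ℂ)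
    (h : ((shiftE - lam • (1 : Module.End ℂ (ℕ → ℂ))) ^ β) d = 0)
    (h0 : ∀ j < β, d j = 0) : d = 0 := by
  induction β generalizing d with
  | zero => simpa using h
  | succ n ih =>
    have he : ((shiftE - lam • (1 : Module.End ℂ (ℕ → ℂ))) ^ n)
        ((shiftE - lam • (1 : Module.End ℂ (ℕ → ℂ))) d) = 0 := by
      rw [← Module.End.mul_apply, ← pow_succ]
      exact h
    have hd : (shiftE - lam • (1 : Module.End ℂ (ℕ → ℂ))) d = 0 := by
      refine ih _ he (fun j hj => ?_)
      rw [D_apply, h0 (j + 1) (by omega), h0 j (by omega)]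
      ring
    funext j
    show d j = 0
    induction j with
    | zero => exact h0 0 (by omega)
    | succ k ihk =>
      have hk := congrFun hd k
      rw [D_apply] at hk
      simp only [Pi.zero_apply] at hk
      have : d (k + 1) = lam * d k := by linear_combination hk
      rw [this, ihk, mul_zero]

lemma Gsol_spec (lam : ℂ) (g : ℕ → ℂ) (β : ℕ) (hβ : 1 ≤ β) :
    ((shiftE - lam • (1 : Module.End ℂ (ℕ → ℂ))) ^ β) (Gsol lam β g) = g := by
  induction β with
  | zero => omega
  | succ n ih =>
    match n, ih with
    | 0, _ => rw [pow_one]; exact DG_one lam g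
    | (m + 1), ih =>
      rw [pow_succ, Module.End.mul_apply, DG_succ lam g m]
      exact ih (by omega)

/-- The unique formal power series solution of `(∂_{m,t} − λ)^β û = ĝ` with
`∂^j_{m,t}û(0) = 0` for `j < β` is given, in `u`-coefficients, by
`u_j = Σ_{k=β-1}^{j-1} C(k,β-1) λ^{k-β+1} g_{j-k-1}` (i.e.
`û = Σ_{k≥β-1} C(k,β-1)(∂^{-1}_{m,t})^{k+1} λ^{k-β+1} ĝ`). -/
theorem formal_solution_simple_equation (lam : ℂ) (β : ℕ) (hβ : 1 ≤ β)
    (g : ℕ → ℂ) (u : ℕ → ℂ) :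
    (((shiftE - lam • (1 : Module.End ℂ (ℕ → ℂ))) ^ β) u = g ∧ ∀ j < β, u j = 0) ↔
    u = fun j => ∑ k ∈ Finset.Ico (β - 1) j,
      (k.choose (β - 1) : ℂ) * lam ^ (k + 1 - β) * g (j - k - 1) := by
  have hinit : ∀ j < β, Gsol lam β g j = 0 := by
    intro j hj
    simp [Gsol, Finset.Ico_eq_empty (show ¬ β - 1 < j by omega)]
  constructor
  · rintro ⟨hu, h0⟩
    have hd : ((shiftE - lam • (1 : Module.End ℂ (ℕ → ℂ))) ^ β) (u - Gsol lam β g) = 0 := by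
      rw [map_sub, hu, Gsol_spec lam g β hβ, sub_self]
    have h0' : ∀ j < β, (u - Gsol lam β g) j = 0 := fun j hj => by
      simp [Pi.sub_apply, h0 j hj, hinit j hj]
    have := sub_eq_zero.mp (uniq lam β _ hd h0')
    exact this
  · rintro rfl
    exact ⟨Gsol_spec lam g β hβ, hinit⟩
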